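/- Gegenbauer solution of the odd singular-vector system (existence part of Theorem 3.2/OddFromPtoP): let n ∈ ℕ with n ≥ 2, let N ∈ ℕ, let p ∈ ℕ with p ≤ n−1, and let λ ∈ ℂ. Define polynomials P, Q, R ∈ ℂ[t] by P(t) := (λ+p−2N−1)·Σ_{j=0}^{N} b_j^{(N)}(λ) t^j, Q(t) := Σ_{j=0}^{N} a_j^{(N)}(λ−1) t^j, and R(t) := 2N·Σ_{j=0}^{N−1} b_j^{(N−1)}(λ−1) t^j (R := 0 if N = 0). Then, with ' denoting the formal polynomial derivative, the following six identities hold in ℂ[t]: (1) 2t(t+1)P'' + (1−4N)tP' + (2λ+n−4N−1)P' + N(2N+1)P = 0; (2) 2P' + 2N·Q − 2tQ' + 2tR' + (λ+n−p−2N)R = 0; (3) −2P' + (λ+p−2N−1)R = 0; (4) 2tP' − (2N+1)P + (λ+p−2N−1)Q = 0; (5) 2t(t+1)Q'' + (3−4N)tQ' + (2λ+n−4N+1)Q' + N(2N−1)Q + 2tR' − (2N−1)R = 0; (6) 2t(t+1)R'' + (5−4N)tR' + (2λ+n−4N+1)R' + (N−1)(2N−1)R = 0. -/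

import Mathlib

open Finset Polynomial

noncomputable def aC (n N j : ℕ) (l : ℂ) : ℂ :=
  (-2 : ℂ) ^ (N - j) *
    ((N.factorial : ℂ) / ((j.factorial : ℂ) * ((2 * N - 2 * j).factorial : ℂ))) *
    ∏ k ∈ Finset.Ico j N, (2 * l - 4 * (N : ℂ) + 2 * (k : ℂ) + (n : ℂ) + 1)

noncomputable def bC (n N j : ℕ) (l : ℂ) : ℂ :=
  (-2 : ℂ) ^ (N - j) *
    ((N.factorial : ℂ) / ((j.factorial : ℂ) * ((2 * N - 2 * j + 1).factorial : ℂ))) *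
    ∏ k ∈ Finset.Ico j N, (2 * l - 4 * (N : ℂ) + 2 * (k : ℂ) + (n : ℂ) - 1)

noncomputable def bCZ (n M : ℕ) (j : ℤ) (l : ℂ) : ℂ :=
  if 0 ≤ j ∧ j ≤ (M : ℤ) then bC n M j.toNat l else 0

noncomputable def alphaC (n N i : ℕ) (l : ℂ) : ℂ :=
  (-1 : ℂ) ^ i * 2 ^ N * ((N.factorial : ℂ) / ((2 * N).factorial : ℂ)) * (N.choose i : ℂ) *
    (∏ k ∈ Finset.Icc (i + 1) N, (2 * l + (n : ℂ) - 2 * (k : ℂ))) *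
    ∏ k ∈ Finset.Icc 1 i, (2 * l + (n : ℂ) - 2 * (k : ℂ) - 2 * (N : ℂ) + 1)

noncomputable def betaC (n N i : ℕ) (l : ℂ) : ℂ :=
  (-1 : ℂ) ^ i * 2 ^ N * ((N.factorial : ℂ) / ((2 * N + 1).factorial : ℂ)) * (N.choose i : ℂ) *
    (∏ k ∈ Finset.Icc (i + 1) N, (2 * l + (n : ℂ) - 2 * (k : ℂ))) *
    ∏ k ∈ Finset.Icc 1 i, (2 * l + (n : ℂ) - 2 * (k : ℂ) - 2 * (N : ℂ) - 1)

noncomputable def gammaC (n N i : ℕ) (l p : ℂ) : ℂ :=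
  (-1 : ℂ) ^ i * 2 ^ N *
    ((N.factorial : ℂ) / (((N : ℂ) + 1) * ((2 * N + 1).factorial : ℂ))) *
    ((N + 1).choose i : ℂ) *
    ((l + p - 2 * (N : ℂ) - 1) * ((N : ℂ) + 1) * (2 * l + (n : ℂ) - 2 * (i : ℂ)) +
      (l + (n : ℂ) - p) * (2 * (N : ℂ) + 1) * ((N : ℂ) - (i : ℂ) + 1)) *
    (∏ k ∈ Finset.Icc (i + 1) N, (2 * l + (n : ℂ) - 2 * (k : ℂ))) *
    ∏ k ∈ Finset.Icc 1 (i - 1), (2 * l + (n : ℂ) - 2 * (k : ℂ) - 2 * (N : ℂ) - 1)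

noncomputable def poch (a : ℂ) (l : ℕ) : ℂ :=
  ∏ m ∈ Finset.range l, (a + (m : ℂ))

lemma bC_clear (n N j : ℕ) (l : ℂ) :
    (j.factorial : ℂ) * ((2 * N - 2 * j + 1).factorial : ℂ) * bC n N j l
      = (-2 : ℂ) ^ (N - j) * (N.factorial : ℂ) *
        ∏ k ∈ Finset.Ico j N, (2 * l - 4 * (N : ℂ) + 2 * (k : ℂ) + (n : ℂ) - 1) := by
  have h1 : (j.factorial : ℂ) ≠ 0 := Nat.cast_ne_zero.2 (Nat.factorial_ne_zero _)
  have h2 : ((2 * N - 2 * j + 1).factorial : ℂ) ≠ 0 := Nat.cast_ne_zero.2 (Nat.factorial_ne_zero _)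
  unfold bC
  field_simp

lemma bkey (n N j : ℕ) (hj : j < N) (l : ℂ) :
    (2*(j:ℂ)^2 - (4*(N:ℂ)+1)*(j:ℂ) + 2*(N:ℂ)^2 + (N:ℂ)) * bC n N j l
      + ((j:ℂ)+1) * (2*l + 2*(j:ℂ) + (n:ℂ) - 4*(N:ℂ) - 1) * bC n N (j+1) l = 0 := by
  obtain ⟨d, rfl⟩ : ∃ d, N = j + d + 1 := ⟨N - j - 1, by omega⟩
  have e1 := bC_clear n (j+d+1) j l
  have e2 := bC_clear n (j+d+1) (j+1) l
  rw [show 2*(j+d+1) - 2*j + 1 = 2*d+3 from by omega,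
     show j+d+1-j = d+1 from by omega,
     Finset.prod_eq_prod_Ico_succ_bot (show j < j+d+1 from by omega)] at e1
  rw [show 2*(j+d+1) - 2*(j+1) + 1 = 2*d+1 from by omega,
     show j+d+1-(j+1) = d from by omega] at e2
  have hf : ((2*d+3).factorial : ℂ) = (2*(d:ℂ)+3) * (2*(d:ℂ)+2) * ((2*d+1).factorial) := by
    rw [show 2*d+3 = (2*d+2)+1 from by ring, Nat.factorial_succ, show 2*d+2 = (2*d+1)+1 from by ring,
      Nat.factorial_succ]
    push_cast; ring
  have hg : (((j+1).factorial : ℂ)) = ((j:ℂ)+1) * (j.factorial) := by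
    rw [Nat.factorial_succ]; push_cast; ring
  rw [hf] at e1
  rw [hg] at e2
  have h1 : (j.factorial : ℂ) ≠ 0 := Nat.cast_ne_zero.2 (Nat.factorial_ne_zero _)
  have h3 : ((2*d+1).factorial : ℂ) ≠ 0 := Nat.cast_ne_zero.2 (Nat.factorial_ne_zero _)
  have h5 : ((j:ℂ)+1) ≠ 0 := by
    have : ((j+1:ℕ):ℂ) ≠ 0 := Nat.cast_ne_zero.2 (by omega)
    push_cast at this; exact this
  have h6 : (2*(d:ℂ)+3) ≠ 0 := by
    have : ((2*d+3:ℕ):ℂ) ≠ 0 := Nat.cast_ne_zero.2 (by omega)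
    push_cast at this; exact this
  have h7 : (2*(d:ℂ)+2) ≠ 0 := by
    have : ((2*d+2:ℕ):ℂ) ≠ 0 := Nat.cast_ne_zero.2 (by omega)
    push_cast at this; exact this
  have key : (((j:ℂ)+1) * (j.factorial) * ((2*d+1).factorial) * ((2*(d:ℂ)+3)*(2*(d:ℂ)+2))) *
      ((2*(j:ℂ)^2 - (4*((j+d+1:ℕ):ℂ)+1)*(j:ℂ) + 2*((j+d+1:ℕ):ℂ)^2 + ((j+d+1:ℕ):ℂ)) * bC n (j+d+1) j l
      + ((j:ℂ)+1) * (2*l + 2*(j:ℂ) + (n:ℂ) - 4*((j+d+1:ℕ):ℂ) - 1) * bC n (j+d+1) (j+1) l) = 0 := by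
    push_cast at e1 e2 ⊢
    linear_combination (((j:ℂ)+1) * (2*(j:ℂ)^2 - (4*((j:ℂ)+(d:ℂ)+1)+1)*(j:ℂ) + 2*((j:ℂ)+(d:ℂ)+1)^2 + ((j:ℂ)+(d:ℂ)+1))) * e1
      + (((j:ℂ)+1)*(2*(d:ℂ)+3)*(2*(d:ℂ)+2)*(2*l + 2*(j:ℂ) + (n:ℂ) - 4*((j:ℂ)+(d:ℂ)+1) - 1)) * e2
  have hK : (((j:ℂ)+1) * (j.factorial) * ((2*d+1).factorial) * ((2*(d:ℂ)+3)*(2*(d:ℂ)+2))) ≠ 0 :=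
    mul_ne_zero (mul_ne_zero (mul_ne_zero h5 h1) h3) (mul_ne_zero h6 h7)
  exact (mul_eq_zero.mp key).resolve_left hK

lemma akey (n N j : ℕ) (hj : j ≤ N) (l : ℂ) :
    aC n N j (l - 1) = (2*(N:ℂ) - 2*(j:ℂ) + 1) * bC n N j l := by
  obtain ⟨d, rfl⟩ : ∃ d, N = j + d := ⟨N - j, by omega⟩
  unfold aC bC
  rw [show 2*(j+d) - 2*j = 2*d from by omega,
    show j+d-j = d from by omega]
  have hA : (∏ k ∈ Finset.Ico j (j+d), (2 * (l-1) - 4 * ((j+d:ℕ) : ℂ) + 2 * (k : ℂ) + (n : ℂ) + 1))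
      = ∏ k ∈ Finset.Ico j (j+d), (2 * l - 4 * ((j+d:ℕ) : ℂ) + 2 * (k : ℂ) + (n : ℂ) - 1) := by
    apply Finset.prod_congr rfl; intro k _; ring
  rw [hA]
  have hf : ((2*d+1).factorial : ℂ) = (2*(d:ℂ)+1) * ((2*d).factorial) := by
    rw [Nat.factorial_succ]; push_cast; ring
  rw [hf]
  have h1 : (j.factorial : ℂ) ≠ 0 := Nat.cast_ne_zero.2 (Nat.factorial_ne_zero _)
  have h2 : ((2*d).factorial : ℂ) ≠ 0 := Nat.cast_ne_zero.2 (Nat.factorial_ne_zero _)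
  have h6 : (2*(d:ℂ)+1) ≠ 0 := by
    have : ((2*d+1:ℕ):ℂ) ≠ 0 := Nat.cast_ne_zero.2 (by omega)
    push_cast at this; exact this
  field_simp
  push_cast
  ring

lemma rkey (n N j : ℕ) (hj : j < N) (l : ℂ) :
    2*(N:ℂ) * bC n (N-1) j (l-1) = 2*((j:ℂ)+1) * bC n N (j+1) l := by
  obtain ⟨d, rfl⟩ : ∃ d, N = j + d + 1 := ⟨N - j - 1, by omega⟩
  unfold bC
  rw [show j+d+1-1 = j+d from by omega, show 2*(j+d) - 2*j + 1 = 2*d+1 from by omega,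
    show j+d-j = d from by omega, show 2*(j+d+1) - 2*(j+1) + 1 = 2*d+1 from by omega,
    show j+d+1-(j+1) = d from by omega]
  have hA : (∏ k ∈ Finset.Ico j (j+d), (2 * (l-1) - 4 * ((j+d:ℕ) : ℂ) + 2 * (k : ℂ) + (n : ℂ) - 1))
      = ∏ k ∈ Finset.Ico (j+1) (j+d+1), (2 * l - 4 * ((j+d+1:ℕ) : ℂ) + 2 * (k : ℂ) + (n : ℂ) - 1) := by
    rw [Finset.prod_Ico_eq_prod_range, Finset.prod_Ico_eq_prod_range,
      show j+d-j = d from by omega, show j+d+1-(j+1) = d from by omega]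
    apply Finset.prod_congr rfl; intro k _; push_cast; ring
  rw [hA]
  have hf : (((j+d+1).factorial : ℂ)) = ((j:ℂ)+(d:ℂ)+1) * ((j+d).factorial) := by
    rw [show j+d+1 = (j+d)+1 from rfl, Nat.factorial_succ]; push_cast; ring
  have hg : (((j+1).factorial : ℂ)) = ((j:ℂ)+1) * (j.factorial) := by
    rw [Nat.factorial_succ]; push_cast; ring
  rw [hf, hg]
  have h1 : (j.factorial : ℂ) ≠ 0 := Nat.cast_ne_zero.2 (Nat.factorial_ne_zero _)
  have h2 : ((2*d+1).factorial : ℂ) ≠ 0 := Nat.cast_ne_zero.2 (Nat.factorial_ne_zero _)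
  have h5 : ((j:ℂ)+1) ≠ 0 := by
    have : ((j+1:ℕ):ℂ) ≠ 0 := Nat.cast_ne_zero.2 (by omega)
    push_cast at this; exact this
  field_simp
  push_cast
  ring

lemma Epoly (n N : ℕ) (l : ℂ) :
    C 2 * X * (X + 1) * derivative (derivative (∑ j ∈ Finset.range (N+1), C (bC n N j l) * X ^ j))
      + C (1 - 4*(N:ℂ)) * X * derivative (∑ j ∈ Finset.range (N+1), C (bC n N j l) * X ^ j)
      + C (2*l + (n:ℂ) - 4*(N:ℂ) - 1) * derivative (∑ j ∈ Finset.range (N+1), C (bC n N j l) * X ^ j)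
      + C ((N:ℂ)*(2*(N:ℂ)+1)) * (∑ j ∈ Finset.range (N+1), C (bC n N j l) * X ^ j) = 0 := by
  simp only [derivative_sum, Finset.mul_sum]
  rw [← Finset.sum_add_distrib, ← Finset.sum_add_distrib, ← Finset.sum_add_distrib]
  have hterm : ∀ j ∈ Finset.range (N+1),
      (C 2 * X * (X+1) * derivative (derivative (C (bC n N j l) * X^j))
        + C (1-4*(N:ℂ)) * X * derivative (C (bC n N j l) * X^j)
        + C (2*l+(n:ℂ)-4*(N:ℂ)-1) * derivative (C (bC n N j l) * X^j)
        + C ((N:ℂ)*(2*(N:ℂ)+1)) * (C (bC n N j l) * X^j))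
      = C ((2*(j:ℂ)^2 - (4*(N:ℂ)+1)*(j:ℂ) + 2*(N:ℂ)^2 + (N:ℂ)) * bC n N j l) * X^j
        + C ((j:ℂ) * (2*(j:ℂ) + (2*l+(n:ℂ)-4*(N:ℂ)-1) - 2) * bC n N j l) * X^(j-1) := by
    intro j _
    match j with
    | 0 =>
      simp only [pow_zero, mul_one, derivative_C, derivative_one, mul_zero, zero_mul,
        Nat.cast_zero, Nat.zero_sub, zero_add, add_zero, derivative_zero]
      push_cast
      simp only [C_add, C_sub, C_mul, C_pow, C_neg, C_1, C_0, map_ofNat, map_natCast]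
      push_cast
      ring
    | 1 =>
      simp only [pow_one, derivative_C_mul, derivative_X, mul_one, derivative_C, mul_zero,
        Nat.cast_one]
      push_cast
      simp only [C_add, C_sub, C_mul, C_pow, C_neg, C_1, C_0, map_ofNat, map_natCast]
      push_cast
      ring
    | (m+2) =>
      rw [derivative_C_mul, derivative_X_pow, derivative_C_mul, derivative_C_mul,
        derivative_X_pow]
      rw [show m+2-1 = m+1 from rfl, show m+1-1 = m from rfl]
      push_cast
      simp only [C_add, C_sub, C_mul, C_pow, C_neg, C_1, C_0, map_ofNat, map_natCast]
      push_cast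
      ring
  rw [Finset.sum_congr rfl hterm]
  rw [Finset.sum_add_distrib]
  rw [Finset.sum_range_succ, Finset.sum_range_succ']
  have hz1 : C ((2*((N:ℕ):ℂ)^2 - (4*(N:ℂ)+1)*((N:ℕ):ℂ) + 2*(N:ℂ)^2 + (N:ℂ)) * bC n N N l) * X^N = 0 := by
    rw [show (2*((N:ℕ):ℂ)^2 - (4*(N:ℂ)+1)*((N:ℕ):ℂ) + 2*(N:ℂ)^2 + (N:ℂ)) = 0 from by ring]
    simp
  have hz2 : C (((0:ℕ):ℂ) * (2*((0:ℕ):ℂ) + (2*l+(n:ℂ)-4*(N:ℂ)-1) - 2) * bC n N 0 l) * X^(0-1) = 0 := by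
    simp
  rw [hz1, hz2, add_zero, add_zero]
  rw [← Finset.sum_add_distrib]
  apply Finset.sum_eq_zero
  intro j hj
  have hb := bkey n N j (Finset.mem_range.mp hj) l
  rw [show j+1-1 = j from rfl, ← add_mul, ← C_add]
  rw [show ((2*(j:ℂ)^2 - (4*(N:ℂ)+1)*(j:ℂ) + 2*(N:ℂ)^2 + (N:ℂ)) * bC n N j l
      + ((j+1:ℕ):ℂ) * (2*((j+1:ℕ):ℂ) + (2*l+(n:ℂ)-4*(N:ℂ)-1) - 2) * bC n N (j+1) l) = 0 from by
    push_cast; linear_combination hb]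
  simp

lemma Qpoly (n N : ℕ) (l : ℂ) :
    (∑ j ∈ Finset.range (N+1), C (aC n N j (l-1)) * X ^ j)
      = C (2*(N:ℂ)+1) * (∑ j ∈ Finset.range (N+1), C (bC n N j l) * X ^ j)
        - C 2 * X * derivative (∑ j ∈ Finset.range (N+1), C (bC n N j l) * X ^ j) := by
  simp only [derivative_sum, Finset.mul_sum]
  rw [← Finset.sum_sub_distrib]
  apply Finset.sum_congr rfl
  intro j hj
  rw [akey n N j (Nat.lt_succ_iff.mp (Finset.mem_range.mp hj)) l]
  match j with
  | 0 =>
    simp only [pow_zero, mul_one, derivative_C, mul_zero, Nat.cast_zero, sub_zero]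
    push_cast
    simp only [C_add, C_sub, C_mul, C_pow, C_neg, C_1, C_0, map_ofNat, map_natCast]
  | (m+1) =>
    rw [derivative_C_mul, derivative_X_pow, show m+1-1 = m from rfl]
    push_cast
    simp only [C_add, C_sub, C_mul, C_pow, C_neg, C_1, C_0, map_ofNat, map_natCast]
    push_cast
    ring

lemma Rpoly (n N : ℕ) (l : ℂ) :
    C (2*(N:ℂ)) * (∑ j ∈ Finset.range N, C (bC n (N-1) j (l-1)) * X ^ j)
      = C 2 * derivative (∑ j ∈ Finset.range (N+1), C (bC n N j l) * X ^ j) := by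
  rw [derivative_sum, Finset.sum_range_succ']
  simp only [pow_zero, mul_one, derivative_C, add_zero]
  rw [Finset.mul_sum, Finset.mul_sum]
  apply Finset.sum_congr rfl
  intro j hj
  have hr := rkey n N j (Finset.mem_range.mp hj) l
  rw [derivative_C_mul, derivative_X_pow, show j+1-1 = j from rfl]
  rw [show C (2*(N:ℂ)) * (C (bC n (N-1) j (l-1)) * X^j)
      = C (2*(N:ℂ) * bC n (N-1) j (l-1)) * X ^ j from by simp only [C_mul]; ring]
  rw [show C 2 * (C (bC n N (j+1) l) * (C (((j+1:ℕ)):ℂ) * X^(j)))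
      = C (2 * ((j:ℂ)+1) * bC n N (j+1) l) * X ^ j from by
    push_cast; simp only [C_add, C_mul, C_1, map_ofNat]; ring]
  rw [hr]

theorem odd_singular_vector_system_existence (n : ℕ) (hn : 2 ≤ n) (N : ℕ)
    (p : ℕ) (hp : p ≤ n - 1) (l : ℂ) :
    ∀ P Q R : Polynomial ℂ,
      P = Polynomial.C (l + (p : ℂ) - 2 * (N : ℂ) - 1) *
            ∑ j ∈ Finset.range (N + 1), Polynomial.C (bC n N j l) * Polynomial.X ^ j →
      Q = ∑ j ∈ Finset.range (N + 1), Polynomial.C (aC n N j (l - 1)) * Polynomial.X ^ j →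
      R = Polynomial.C (2 * (N : ℂ)) *
            ∑ j ∈ Finset.range N, Polynomial.C (bC n (N - 1) j (l - 1)) * Polynomial.X ^ j →
      (C 2 * X * (X + 1) * derivative (derivative P) + C (1 - 4 * (N : ℂ)) * X * derivative P
          + C (2 * l + (n : ℂ) - 4 * (N : ℂ) - 1) * derivative P
          + C ((N : ℂ) * (2 * (N : ℂ) + 1)) * P = 0) ∧
      (C 2 * derivative P + C (2 * (N : ℂ)) * Q - C 2 * X * derivative Q
          + C 2 * X * derivative R + C (l + (n : ℂ) - (p : ℂ) - 2 * (N : ℂ)) * R = 0) ∧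
      (-(C 2 * derivative P) + C (l + (p : ℂ) - 2 * (N : ℂ) - 1) * R = 0) ∧
      (C 2 * X * derivative P - C (2 * (N : ℂ) + 1) * P
          + C (l + (p : ℂ) - 2 * (N : ℂ) - 1) * Q = 0) ∧
      (C 2 * X * (X + 1) * derivative (derivative Q) + C (3 - 4 * (N : ℂ)) * X * derivative Q
          + C (2 * l + (n : ℂ) - 4 * (N : ℂ) + 1) * derivative Q
          + C ((N : ℂ) * (2 * (N : ℂ) - 1)) * Q
          + C 2 * X * derivative R - C (2 * (N : ℂ) - 1) * R = 0) ∧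
      (C 2 * X * (X + 1) * derivative (derivative R) + C (5 - 4 * (N : ℂ)) * X * derivative R
          + C (2 * l + (n : ℂ) - 4 * (N : ℂ) + 1) * derivative R
          + C (((N : ℂ) - 1) * (2 * (N : ℂ) - 1)) * R = 0) := by
  intro P Q R hP hQ hR
  rw [Qpoly n N l] at hQ
  rw [Rpoly n N l] at hR
  subst hP; subst hQ; subst hR
  have hE := Epoly n N l
  have hE' := congrArg derivative hE
  simp only [derivative_add, derivative_mul, derivative_C, derivative_X, derivative_zero, derivative_one,
    zero_mul, mul_zero, zero_add, add_zero, mul_one, one_mul] at hE'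
  simp only [C_add, C_sub, C_mul, C_pow, C_neg, C_1, C_0, map_ofNat, map_natCast] at hE hE'
  refine ⟨?_, ?_, ?_, ?_, ?_, ?_⟩ <;>
    simp only [derivative_add, derivative_sub, derivative_mul, derivative_C, derivative_X, derivative_one,
      derivative_zero, zero_mul, mul_zero, zero_add, add_zero, mul_one, one_mul] <;>
    simp only [C_add, C_sub, C_mul, C_pow, C_neg, C_1, C_0, map_ofNat, map_natCast]
  · linear_combination (C l + (p : Polynomial ℂ) - 2*((N : Polynomial ℂ)) - 1) * hE
  · linear_combination (2 : Polynomial ℂ) * hE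
  · ring
  · ring
  · linear_combination (2*((N : Polynomial ℂ)) - 1) * hE - 2*X*hE'
  · linear_combination (2 : Polynomial ℂ) * hE'
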